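/- Let D ⊆ ℝ^d be compact convex, f : D → ℝ continuous and concave, and let F(x) = f(x) − conv f(x) where conv f is the greatest convex function majorized by f. A point x̃ ∈ D maximizes F if and only if there exists ξ ∈ ℝ^d such that for all x ∈ D: ξᵀ(x − x̃) + conv f(x̃) ≤ conv f(x) ≤ f(x) ≤ ξᵀ(x − x̃) + f(x̃). -/

import Mathlib

open BigOperators Matrix
open Pointwise

/-- Supporting-hyperplane characterization of maximizers of `F(x) = f(x) - conv f(x)`, where
`cg = conv f` is the greatest convex function majorized by `f` on `D`:  `xt ∈ D` maximizes `F`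
iff there is `ξ ∈ ℝ^d` with
`ξᵀ(x - xt) + cg xt ≤ cg x ≤ f x ≤ ξᵀ(x - xt) + f xt` for all `x ∈ D`. -/
theorem maximizer_iff_supporting_hyperplane {d : ℕ} (D : Set (Fin d → ℝ))
    (hDconv : Convex ℝ D) (hDcomp : IsCompact D)
    (f cg : (Fin d → ℝ) → ℝ) (hf : ConcaveOn ℝ D f) (hfcont : ContinuousOn f D)
    (hcgconv : ConvexOn ℝ D cg) (hcgle : ∀ x ∈ D, cg x ≤ f x)
    (hcggreatest : ∀ h : (Fin d → ℝ) → ℝ, ConvexOn ℝ D h → (∀ x ∈ D, h x ≤ f x) →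
      ∀ x ∈ D, h x ≤ cg x)
    (xt : Fin d → ℝ) (hxt : xt ∈ D) :
    (∀ x ∈ D, f x - cg x ≤ f xt - cg xt) ↔
      ∃ ξ : Fin d → ℝ, ∀ x ∈ D,
        ξ ⬝ᵥ (x - xt) + cg xt ≤ cg x ∧ cg x ≤ f x ∧ f x ≤ ξ ⬝ᵥ (x - xt) + f xt := by
  constructor
  · intro hmax
    set M : ℝ := f xt - cg xt with hM
    set W : Submodule ℝ (Fin d → ℝ) := Submodule.span ℝ ((fun x => x - xt) '' D) with hW
    obtain ⟨U, hU⟩ := Submodule.exists_isCompl W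
    -- epigraph of cg and hypograph of f - M
    set A : Set ((Fin d → ℝ) × ℝ) := {p | p.1 ∈ D ∧ cg p.1 ≤ p.2} with hA
    set B : Set ((Fin d → ℝ) × ℝ) := {p | p.1 ∈ D ∧ p.2 ≤ f p.1 - M} with hB
    set C : Set ((Fin d → ℝ) × ℝ) := (A - B) + ((U : Set (Fin d → ℝ)) ×ˢ ({0} : Set ℝ))
      with hCdef
    have hAconv : Convex ℝ A := hcgconv.convex_epigraph
    have hBconv : Convex ℝ B := by
      have : ConcaveOn ℝ D (fun x => f x - M) :=
        hf.sub (convexOn_const M hDconv)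
      exact this.convex_hypograph
    have hC : Convex ℝ C :=
      (hAconv.sub hBconv).add (U.convex.prod (convex_singleton 0))
    -- membership introduction
    have hmemC : ∀ (x y : Fin d → ℝ) (s t : ℝ) (u : Fin d → ℝ), x ∈ D → y ∈ D →
        cg x ≤ s → t ≤ f y - M → u ∈ U → ((x - y + u, s - t) : (Fin d → ℝ) × ℝ) ∈ C := by
      intro x y s t u hx hy hs ht hu
      have heq : (((x, s) : (Fin d → ℝ) × ℝ) - (y, t)) + (u, (0:ℝ)) = (x - y + u, s - t) := by
        simp [Prod.ext_iff]
      rw [← heq]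
      exact Set.add_mem_add (Set.sub_mem_sub ⟨hx, hs⟩ ⟨hy, ht⟩)
        (Set.mem_prod.2 ⟨hu, rfl⟩)
    -- membership elimination
    have hmemC' : ∀ p ∈ C, ∃ x ∈ D, ∃ y ∈ D, ∃ s t : ℝ, ∃ u ∈ U,
        cg x ≤ s ∧ t ≤ f y - M ∧ p = (x - y + u, s - t) := by
      intro p hp
      rw [hCdef] at hp
      rcases Set.mem_add.1 hp with ⟨q, hq, r, hr, hqr⟩
      rcases Set.mem_sub.1 hq with ⟨a, ha, b, hb, hab⟩
      rcases Set.mem_prod.1 hr with ⟨hr1, hr2⟩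
      refine ⟨a.1, ha.1, b.1, hb.1, a.2, b.2, r.1, hr1, ha.2, hb.2, ?_⟩
      have hr2' : r.2 = 0 := hr2
      rw [← hqr, ← hab]
      simp [Prod.ext_iff, hr2']
    have hfxtM : f xt - M = cg xt := by rw [hM]; ring
    have h0C : ((0, 0) : (Fin d → ℝ) × ℝ) ∈ C := by
      have := hmemC xt xt (cg xt) (cg xt) 0 hxt hxt le_rfl (by rw [hfxtM]) U.zero_mem
      simpa using this
    have heC : (((0 : Fin d → ℝ), (1:ℝ)) : (Fin d → ℝ) × ℝ) ∈ C := by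
      have := hmemC xt xt (cg xt + 1) (cg xt) 0 hxt hxt (by linarith) (by rw [hfxtM])
        U.zero_mem
      simpa using this
    have huC : ∀ u ∈ U, ((u, (0:ℝ)) : (Fin d → ℝ) × ℝ) ∈ C := by
      intro u hu
      have := hmemC xt xt (cg xt) (cg xt) u hxt hxt le_rfl (by rw [hfxtM]) hu
      simpa using this
    have hxC : ∀ x ∈ D, ((x - xt, cg x - cg xt) : (Fin d → ℝ) × ℝ) ∈ C := by
      intro x hx
      have := hmemC x xt (cg x) (cg xt) 0 hx hxt le_rfl (by rw [hfxtM]) U.zero_mem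
      simpa using this
    have hxyC : ∀ x ∈ D, ∀ y ∈ D,
        ((x - y, cg x - (f y - M)) : (Fin d → ℝ) × ℝ) ∈ C := by
      intro x hx y hy
      have := hmemC x y (cg x) (f y - M) 0 hx hy le_rfl le_rfl U.zero_mem
      simpa using this
    -- 0 is not in the interior of C
    have h0ni : ((0, 0) : (Fin d → ℝ) × ℝ) ∉ interior C := by
      intro h0i
      obtain ⟨ε, hε, hball⟩ := Metric.mem_nhds_iff.1 (isOpen_interior.mem_nhds h0i)
      have hmem : (((0 : Fin d → ℝ), -(ε/2)) : (Fin d → ℝ) × ℝ) ∈ C := by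
        apply interior_subset
        apply hball
        rw [Metric.mem_ball]
        rw [dist_eq_norm]
        simp [Prod.norm_def, abs_of_pos hε]
        linarith
      obtain ⟨x, hx, y, hy, s, t, u, hu, hs, ht, hpeq⟩ := hmemC' _ hmem
      have h1 : x - y + u = 0 := congrArg Prod.fst hpeq.symm
      have h2 : s - t = -(ε/2) := (congrArg Prod.snd hpeq).symm
      have hxyW : x - y ∈ W := by
        have : x - y = (x - xt) - (y - xt) := by abel
        rw [this]
        exact W.sub_mem (Submodule.subset_span ⟨x, hx, rfl⟩)
          (Submodule.subset_span ⟨y, hy, rfl⟩)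
      have hxyU : x - y ∈ U := by
        have : x - y = -u := by
          have := h1; rw [add_eq_zero_iff_eq_neg] at this; exact this
        rw [this]; exact U.neg_mem hu
      have hxy0 : x - y = 0 := (Submodule.disjoint_def.1 hU.disjoint) _ hxyW hxyU
      have hxeqy : x = y := sub_eq_zero.1 hxy0
      have := hmax x hx
      rw [hxeqy] at hs
      have : (0:ℝ) ≤ s - t := by
        have := hmax y hy
        linarith
      linarith
    -- C spans everything, so its interior is nonempty
    have hspan : Submodule.span ℝ C = ⊤ := by
      rw [Submodule.eq_top_iff']
      intro p
      have he : (((0 : Fin d → ℝ), (1:ℝ)) : (Fin d → ℝ) × ℝ) ∈ Submodule.span ℝ C :=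
        Submodule.subset_span heC
      have hxspan : ∀ x ∈ D, ((x - xt, (0:ℝ)) : (Fin d → ℝ) × ℝ) ∈ Submodule.span ℝ C := by
        intro x hx
        have h1 : ((x - xt, cg x - cg xt) : (Fin d → ℝ) × ℝ) ∈ Submodule.span ℝ C :=
          Submodule.subset_span (hxC x hx)
        have h2 := (Submodule.span ℝ C).sub_mem h1
          ((Submodule.span ℝ C).smul_mem (cg x - cg xt) he)
        have heq : ((x - xt, cg x - cg xt) : (Fin d → ℝ) × ℝ) -
            (cg x - cg xt) • ((0 : Fin d → ℝ), (1:ℝ)) = (x - xt, 0) := by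
          simp [Prod.ext_iff]
        rwa [heq] at h2
      have hwspan : ∀ w ∈ W, ((w, (0:ℝ)) : (Fin d → ℝ) × ℝ) ∈ Submodule.span ℝ C := by
        intro w hw
        have hle : W ≤ (Submodule.span ℝ C).comap
            (LinearMap.inl ℝ (Fin d → ℝ) ℝ) := by
          rw [hW, Submodule.span_le]
          rintro _ ⟨x, hx, rfl⟩
          exact hxspan x hx
        exact hle hw
      have huspan : ∀ u ∈ U, ((u, (0:ℝ)) : (Fin d → ℝ) × ℝ) ∈ Submodule.span ℝ C := by
        intro u hu; exact Submodule.subset_span (huC u hu)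
      obtain ⟨w, hw, u, hu, hwu⟩ := Submodule.mem_sup.1
        (by rw [hU.sup_eq_top]; exact Submodule.mem_top : p.1 ∈ W ⊔ U)
      have heq : p = ((w, (0:ℝ)) : (Fin d → ℝ) × ℝ) + ((u, (0:ℝ)) : (Fin d → ℝ) × ℝ)
          + p.2 • ((0 : Fin d → ℝ), (1:ℝ)) := by
        simp [Prod.ext_iff, hwu]
      rw [heq]
      exact (Submodule.span ℝ C).add_mem
        ((Submodule.span ℝ C).add_mem (hwspan w hw) (huspan u hu))
        ((Submodule.span ℝ C).smul_mem p.2 he)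
    have haff : affineSpan ℝ C = ⊤ := by
      rw [eq_top_iff]
      intro p _
      have hpv : p ∈ (affineSpan ℝ C).direction := by
        rw [direction_affineSpan, vectorSpan_def]
        have hCsub : C ⊆ C -ᵥ C := by
          intro c hc
          exact ⟨c, hc, (0,0), h0C, by simp [vsub_eq_sub]⟩
        exact Submodule.span_mono hCsub (hspan ▸ Submodule.mem_top : p ∈ Submodule.span ℝ C)
      have := AffineSubspace.vadd_mem_of_mem_direction hpv
        (subset_affineSpan ℝ C h0C)
      have h00 : ((0,0) : (Fin d → ℝ) × ℝ) = 0 := rfl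
      simpa [h00] using this
    have hint : (interior C).Nonempty :=
      hC.interior_nonempty_iff_affineSpan_eq_top.2 haff
    obtain ⟨a₀, ha₀⟩ := hint
    obtain ⟨φ, hφ⟩ := geometric_hahn_banach_open_point hC.interior isOpen_interior h0ni
    have hφ0 : φ (((0,0)) : (Fin d → ℝ) × ℝ) = 0 := by
      have h00 : (((0,0)) : (Fin d → ℝ) × ℝ) = 0 := rfl
      rw [h00, map_zero]
    have ha₀neg : φ a₀ < 0 := by have := hφ a₀ ha₀; rwa [hφ0] at this
    have hφle : ∀ p ∈ C, φ p ≤ 0 := by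
      intro p hp
      by_contra hcon
      push_neg at hcon
      have hqc : 0 < φ p - φ a₀ := by linarith
      set t : ℝ := (φ p/2 - φ a₀)/(φ p - φ a₀) with htdef
      have ht0 : 0 ≤ t := div_nonneg (by linarith) hqc.le
      have ht1 : t < 1 := (div_lt_one hqc).2 (by linarith)
      have hmemI := hC.combo_interior_self_mem_interior ha₀ hp
        (show (0:ℝ) < 1 - t by linarith) ht0 (by ring)
      have hlt := hφ _ hmemI
      rw [hφ0] at hlt
      have hmap : φ ((1-t) • a₀ + t • p) = (1-t) * φ a₀ + t * φ p := by
        simp [map_add, _root_.map_smul, smul_eq_mul]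
      have htq : t * (φ p - φ a₀) = φ p/2 - φ a₀ := div_mul_cancel₀ _ hqc.ne'
      have hval : (1-t) * φ a₀ + t * φ p = φ p/2 := by linear_combination htq
      rw [hmap, hval] at hlt
      linarith
    set β : ℝ := φ (((0 : Fin d → ℝ), (1:ℝ))) with hβdef
    have hφdec : ∀ (v : Fin d → ℝ) (r : ℝ), φ ((v, r)) = φ ((v, 0)) + r * β := by
      intro v r
      have heq : ((v, r) : (Fin d → ℝ) × ℝ) = (v, 0) + r • ((0 : Fin d → ℝ), (1:ℝ)) := by
        simp [Prod.ext_iff]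
      rw [heq, map_add, _root_.map_smul, smul_eq_mul, hβdef]
    have hβ0 : β ≤ 0 := hφle _ heC
    have hβneg : β < 0 := by
      rcases lt_or_eq_of_le hβ0 with h | h
      · exact h
      exfalso
      have hxy0 : ∀ x ∈ D, ∀ y ∈ D, φ (((x - y, (0:ℝ)))) ≤ 0 := by
        intro x hx y hy
        have hh := hφle _ (hxyC x hx y hy)
        rw [hφdec, h] at hh
        linarith
      have hxyz : ∀ x ∈ D, ∀ y ∈ D, φ (((x - y, (0:ℝ)))) = 0 := by
        intro x hx y hy
        have h1 := hxy0 x hx y hy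
        have h2 := hxy0 y hy x hx
        have hneg : ((y - x, (0:ℝ)) : (Fin d → ℝ) × ℝ) = -(x - y, (0:ℝ)) := by
          simp [Prod.ext_iff]
        rw [hneg, map_neg] at h2
        linarith
      have hu0 : ∀ u ∈ U, φ (((u, (0:ℝ)))) = 0 := by
        intro u hu
        have h1 := hφle _ (huC u hu)
        have h2 := hφle _ (huC (-u) (U.neg_mem hu))
        have hneg : ((-u, (0:ℝ)) : (Fin d → ℝ) × ℝ) = -(u, (0:ℝ)) := by
          simp [Prod.ext_iff]
        rw [hneg, map_neg] at h2
        linarith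
      have hw0 : ∀ w ∈ W, φ (((w, (0:ℝ)))) = 0 := by
        intro w hw
        have hle : W ≤ LinearMap.ker
            ((φ : ((Fin d → ℝ) × ℝ) →ₗ[ℝ] ℝ).comp (LinearMap.inl ℝ (Fin d → ℝ) ℝ)) := by
          rw [hW, Submodule.span_le]
          rintro _ ⟨x, hx, rfl⟩
          exact LinearMap.mem_ker.2 (hxyz x hx xt hxt)
        exact LinearMap.mem_ker.1 (hle hw)
      obtain ⟨w, hwW, u, huU, hwu⟩ := Submodule.mem_sup.1
        (by rw [hU.sup_eq_top]; exact Submodule.mem_top : a₀.1 ∈ W ⊔ U)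
      have ha₀eq : a₀ = ((w, (0:ℝ)) : (Fin d → ℝ) × ℝ) + (u, (0:ℝ))
          + a₀.2 • ((0 : Fin d → ℝ), (1:ℝ)) := by
        simp [Prod.ext_iff, hwu]
      have : φ a₀ = 0 := by
        rw [ha₀eq, map_add, map_add, _root_.map_smul, smul_eq_mul,
          hw0 w hwW, hu0 u huU, ← hβdef, h]
        ring
      linarith
    have hβpos : 0 < -β := neg_pos.2 hβneg
    have hkey : ∀ x ∈ D, ∀ y ∈ D,
        φ (((x - y, (0:ℝ)))) ≤ (-β) * (cg x - (f y - M)) := by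
      intro x hx y hy
      have hh := hφle _ (hxyC x hx y hy)
      rw [hφdec] at hh
      have e : (-β) * (cg x - (f y - M)) = -((cg x - (f y - M)) * β) := by ring
      rw [e]
      linarith
    set ξ : Fin d → ℝ :=
      fun i => φ (((fun j => if i = j then (1:ℝ) else 0), (0:ℝ))) / (-β) with hξdef
    have hξdot : ∀ v : Fin d → ℝ, ξ ⬝ᵥ v = φ ((v, (0:ℝ))) / (-β) := by
      intro v
      have hL := LinearMap.pi_apply_eq_sum_univ
        ((φ : ((Fin d → ℝ) × ℝ) →ₗ[ℝ] ℝ).comp (LinearMap.inl ℝ (Fin d → ℝ) ℝ)) v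
      have hLv : φ ((v, (0:ℝ))) =
          ∑ i, v i • φ ((((fun j => if i = j then (1:ℝ) else 0) : Fin d → ℝ), (0:ℝ))) := hL
      rw [dotProduct, hLv, Finset.sum_div]
      apply Finset.sum_congr rfl
      intro i _
      rw [hξdef]
      simp only [smul_eq_mul]
      ring
    have hstep : ∀ (v : Fin d → ℝ) (r : ℝ),
        φ ((v, (0:ℝ))) ≤ (-β) * r → ξ ⬝ᵥ v ≤ r := by
      intro v r hvr
      rw [hξdot, div_le_iff₀ hβpos]
      have e : r * (-β) = (-β) * r := by ring
      rw [e]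
      exact hvr
    refine ⟨ξ, fun x hx => ⟨?_, hcgle x hx, ?_⟩⟩
    · have h1 := hkey x hx xt hxt
      rw [hfxtM] at h1
      have h2 : ξ ⬝ᵥ (x - xt) ≤ cg x - cg xt := hstep _ _ h1
      linarith
    · have h1 := hkey xt hxt x hx
      have h2 : ξ ⬝ᵥ (xt - x) ≤ cg xt - (f x - M) := hstep _ _ h1
      have h3 : ξ ⬝ᵥ (x - xt) = -(ξ ⬝ᵥ (xt - x)) := by
        rw [show x - xt = -(xt - x) from (neg_sub xt x).symm, dotProduct_neg]
      rw [hM] at h2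
      linarith
  · rintro ⟨ξ, hξ⟩ x hx
    obtain ⟨h1, h2, h3⟩ := hξ x hx
    obtain ⟨h1', h2', h3'⟩ := hξ xt hxt
    linarith
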